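/- For positive integers n and nonnegative k with k ≤ n-1, the alternating sum ∑_{m=n}^{2n-1} (-1)^{m-n-k} * C(3n, n+1+m) * C(m-1, n-1) * C(m-n, k) equals C(n-1+k, n-1) * C(2n-k, n+1). -/

import Mathlib

-- base case: ∑_{t≤M} (-1)^t C(N+1, M-t) = C(N, M)
lemma aux0 (N : ℕ) : ∀ M : ℕ,
    ∑ t ∈ Finset.range (M+1), (-1:ℤ)^t * (N+1).choose (M - t) = (N.choose M : ℤ) := by
  intro M
  induction M with
  | zero => simp
  | succ M ih =>
    rw [Finset.sum_range_succ']
    simp only [Nat.add_sub_cancel, pow_succ, pow_zero, one_mul, Nat.sub_zero]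
    have h1 : ∀ t ∈ Finset.range (M+1),
        (-1:ℤ)^t * (-1) * (N+1).choose (M + 1 - (t+1)) = -((-1:ℤ)^t * (N+1).choose (M - t)) := by
      intro t _; rw [Nat.succ_sub_succ]; ring
    rw [Finset.sum_congr rfl h1, Finset.sum_neg_distrib, ih]
    rw [Nat.choose_succ_succ' N M]
    push_cast
    ring

lemma keylem : ∀ r M N : ℕ,
    ∑ t ∈ Finset.range (M+1), (-1:ℤ)^t * (r+t).choose t * (N+r+1).choose (M - t)
      = (N.choose M : ℤ) := by
  intro r
  induction r with
  | zero =>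
    intro M N
    have := aux0 N M
    rw [← this]
    apply Finset.sum_congr rfl
    intro t _
    simp [Nat.choose_self]
  | succ r ihr =>
    intro M
    induction M with
    | zero => intro N; simp
    | succ M ihM =>
      intro N
      rw [Finset.sum_range_succ']
      have h1 : ∀ t ∈ Finset.range (M+1),
          (-1:ℤ)^(t+1) * ((r+1)+(t+1)).choose (t+1) * (N+(r+1)+1).choose (M + 1 - (t+1))
            = -((-1:ℤ)^t * (r+1+t).choose t * (N+r+2).choose (M-t))
              - ((-1:ℤ)^t * (r+1+t).choose (t+1) * (N+r+2).choose (M-t)) := by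
        intro t _
        rw [Nat.succ_sub_succ]
        have : ((r+1)+(t+1)).choose (t+1) = (r+1+t).choose t + (r+1+t).choose (t+1) := by
          have h := Nat.choose_succ_succ' (r+1+t) t
          have : (r+1)+(t+1) = (r+1+t)+1 := by omega
          rw [this, h]
        rw [this]
        have : N+(r+1)+1 = N+r+2 := by omega
        rw [this]
        push_cast
        ring
      rw [Finset.sum_congr rfl h1, Finset.sum_sub_distrib, Finset.sum_neg_distrib]
      -- first sum is ihM at N
      have e1 : ∑ t ∈ Finset.range (M+1), (-1:ℤ)^t * (r+1+t).choose t * (N+r+2).choose (M-t)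
          = (N.choose M : ℤ) := by
        have := ihM N
        rw [← this]
        apply Finset.sum_congr rfl
        intro t _
        have : N+(r+1)+1 = N+r+2 := by omega
        rw [this]
      -- second sum via ihr at (M+1, N+1), peeling t = 0
      have e2 : ∑ t ∈ Finset.range (M+1), (-1:ℤ)^t * (r+1+t).choose (t+1) * (N+r+2).choose (M-t)
          = ((N+r+2).choose (M+1) : ℤ) - ((N+1).choose (M+1) : ℤ) := by
        have h := ihr (M+1) (N+1)
        rw [Finset.sum_range_succ'] at h
        have h2 : ∀ t ∈ Finset.range (M+1),
            (-1:ℤ)^(t+1) * (r+(t+1)).choose (t+1) * ((N+1)+r+1).choose (M + 1 - (t+1))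
              = -((-1:ℤ)^t * (r+1+t).choose (t+1) * (N+r+2).choose (M-t)) := by
          intro t _
          rw [Nat.succ_sub_succ]
          have ha : r+(t+1) = r+1+t := by omega
          have hb : (N+1)+r+1 = N+r+2 := by omega
          rw [ha, hb]
          push_cast
          ring
        rw [Finset.sum_congr rfl h2, Finset.sum_neg_distrib] at h
        simp only [pow_zero, one_mul, Nat.choose_zero_right, Nat.sub_zero, Nat.cast_one] at h
        have hb : (N+1)+r+1 = N+r+2 := by omega
        rw [hb] at h
        linarith
      rw [e1, e2]
      simp only [pow_zero, one_mul, Nat.choose_zero_right, Nat.sub_zero, Nat.cast_one]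
      have : N+(r+1)+1 = N+r+2 := by omega
      rw [this]
      rw [Nat.choose_succ_succ' N M]
      push_cast
      ring

theorem stmt_2 (n k : ℕ) (hn : 0 < n) (hk : k ≤ n - 1) :
    ∑ m ∈ Finset.Icc n (2 * n - 1),
      (-1 : ℤ) ^ (m - n + k) * (Nat.choose (3 * n) (n + 1 + m)) *
        (Nat.choose (m - 1) (n - 1)) * (Nat.choose (m - n) k)
      = Nat.choose (n - 1 + k) (n - 1) * Nat.choose (2 * n - k) (n + 1) := by
  obtain ⟨p, rfl⟩ : ∃ p, n = p + 1 := ⟨n - 1, by omega⟩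
  have hk' : k ≤ p := by omega
  have h1 : Finset.Icc (p+1) (2*(p+1)-1) = Finset.Ico (p+1) (2*(p+1)) := by
    rw [← Finset.Ico_add_one_right_eq_Icc]; congr 1
  rw [h1, Finset.sum_Ico_eq_sum_range]
  have h2 : 2*(p+1) - (p+1) = p+1 := by omega
  rw [h2]
  -- canonicalize summand
  have h3 : ∀ j ∈ Finset.range (p+1),
      (-1:ℤ)^((p+1)+j-(p+1)+k) * ((3*(p+1)).choose ((p+1)+1+((p+1)+j))) *
          (((p+1)+j-1).choose ((p+1)-1)) * (((p+1)+j-(p+1)).choose k)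
        = (-1:ℤ)^(j+k) * ((3*(p+1)).choose (2*(p+1)+1+j)) * ((p+j).choose p) * (j.choose k) := by
    intro j _
    have e1 : (p+1)+j-(p+1)+k = j+k := by omega
    have e2 : (p+1)+1+((p+1)+j) = 2*(p+1)+1+j := by omega
    have e3 : (p+1)+j-1 = p+j := by omega
    have e4 : (p+1)+j-(p+1) = j := by omega
    have e5 : (p+1)-1 = p := by omega
    rw [e1, e2, e3, e4, e5]
  rw [Finset.sum_congr rfl h3]
  -- split the range at k
  set M := p - k with hM
  have hsplit := Finset.sum_range_add
    (fun j => (-1:ℤ)^(j+k) * ((3*(p+1)).choose (2*(p+1)+1+j)) * ((p+j).choose p) * (j.choose k))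
    k (M+1)
  rw [show k + (M+1) = p+1 by omega] at hsplit
  rw [hsplit]
  have hzero : ∑ j ∈ Finset.range k,
      ((-1:ℤ)^(j+k) * ((3*(p+1)).choose (2*(p+1)+1+j)) * ((p+j).choose p) * (j.choose k)) = 0 := by
    apply Finset.sum_eq_zero
    intro j hj
    rw [Nat.choose_eq_zero_of_lt (Finset.mem_range.mp hj)]
    simp
  rw [hzero, zero_add]
  -- rewrite each term of the second sum
  have h4 : ∀ t ∈ Finset.range (M+1),
      (-1:ℤ)^((k+t)+k) * ((3*(p+1)).choose (2*(p+1)+1+(k+t))) * ((p+(k+t)).choose p) *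
          ((k+t).choose k)
        = ((p+k).choose k : ℤ) *
            ((-1:ℤ)^t * ((p+k)+t).choose t * ((2*(p+1)-k)+(p+k)+1).choose (M - t)) := by
    intro t ht
    have ht' : t ≤ M := by exact Nat.lt_succ_iff.mp (Finset.mem_range.mp ht)
    have ea : (-1:ℤ)^((k+t)+k) = (-1:ℤ)^t := by
      rw [show (k+t)+k = t + 2*k by omega, pow_add, pow_mul]
      norm_num
    have eb : (3*(p+1)).choose (2*(p+1)+1+(k+t)) = (3*(p+1)).choose (M - t) := by
      apply Nat.choose_symm_of_eq_add
      omega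
    have ec : (p+(k+t)).choose p * (k+t).choose k = (p+k).choose k * ((p+k)+t).choose t := by
      rw [Nat.choose_symm_add, Nat.choose_symm_add,
        Nat.choose_mul (n := p+(k+t)) (by omega : t ≤ k+t),
        show p+(k+t) - t = p+k by omega, show k+t-t = k by omega]
      ring
    have ed : (2*(p+1)-k)+(p+k)+1 = 3*(p+1) := by omega
    rw [ea, eb, ed]
    have ec' : ((p+(k+t)).choose p : ℤ) * ((k+t).choose k : ℤ)
        = ((p+k).choose k : ℤ) * (((p+k)+t).choose t : ℤ) := by exact_mod_cast ec
    linear_combination ((-1:ℤ)^t * ((3*(p+1)).choose (M-t))) * ec'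
  rw [Finset.sum_congr rfl h4, ← Finset.mul_sum, keylem (p+k) M (2*(p+1)-k)]
  -- finish: RHS arithmetic
  have er1 : (p+1-1+k).choose (p+1-1) = (p+k).choose k := by
    rw [show p+1-1 = p from rfl]
    exact Nat.choose_symm_add
  have er2 : (2*(p+1)-k).choose ((p+1)+1) = (2*(p+1)-k).choose M := by
    apply Nat.choose_symm_of_eq_add
    omega
  rw [er1, er2]
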